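/- Let α be the softmax of logits ℓ : Fin N → ℝ where ℓ j* ≥ ℓ j + Δ for all j ≠ j*, Δ > 0, N ≥ 2. Then the Shannon entropy satisfies H(α) ≤ -p log p - (1-p) log(1-p) + (1-p) log(N-1), where p = 1/(1 + (N-1) exp(-Δ)). -/

import Mathlib

noncomputable def smax (N : ℕ) (ℓ : Fin N → ℝ) (j : Fin N) : ℝ :=
  Real.exp (ℓ j) / ∑ k, Real.exp (ℓ k)

theorem entropy_upper_bound_of_margin (N : ℕ) (hN : 2 ≤ N) (ℓ : Fin N → ℝ)
    (jstar : Fin N) (Δ : ℝ) (hΔ : 0 < Δ)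
    (hmargin : ∀ j, j ≠ jstar → ℓ j + Δ ≤ ℓ jstar) :
    (-∑ j, smax N ℓ j * Real.log (smax N ℓ j)) ≤
      -(1 / (1 + ((N : ℝ) - 1) * Real.exp (-Δ))) *
          Real.log (1 / (1 + ((N : ℝ) - 1) * Real.exp (-Δ))) -
        (1 - 1 / (1 + ((N : ℝ) - 1) * Real.exp (-Δ))) *
          Real.log (1 - 1 / (1 + ((N : ℝ) - 1) * Real.exp (-Δ))) +
        (1 - 1 / (1 + ((N : ℝ) - 1) * Real.exp (-Δ))) * Real.log ((N : ℝ) - 1) := by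
  have hN1 : (1:ℝ) ≤ (N:ℝ) - 1 := by
    have : (2:ℝ) ≤ (N:ℝ) := by exact_mod_cast hN
    linarith
  have hN1pos : (0:ℝ) < (N:ℝ) - 1 := by linarith
  set p : ℝ := 1 / (1 + ((N : ℝ) - 1) * Real.exp (-Δ)) with hpdef
  set D : ℝ := 1 + ((N : ℝ) - 1) * Real.exp (-Δ) with hDdef
  have hexp1 : Real.exp (-Δ) < 1 := Real.exp_lt_one_iff.mpr (by linarith)
  have hexp0 : 0 < Real.exp (-Δ) := Real.exp_pos _
  have hD : 0 < D := by rw [hDdef]; positivity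
  have hp0 : 0 < p := by rw [hpdef]; positivity
  have hp1 : p < 1 := by
    rw [hpdef, div_lt_one hD]
    nlinarith
  have hpN : 1 ≤ (N:ℝ) * p := by
    rw [hpdef, mul_one_div, le_div_iff₀ hD, one_mul, hDdef]
    nlinarith
  -- softmax facts
  have hS : 0 < ∑ k, Real.exp (ℓ k) :=
    Finset.sum_pos (fun k _ => Real.exp_pos _) ⟨⟨0, by omega⟩, Finset.mem_univ _⟩
  have hα_pos : ∀ j, 0 < smax N ℓ j := fun j => div_pos (Real.exp_pos _) hS
  have hα_sum : ∑ j, smax N ℓ j = 1 := by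
    simp only [smax, ← Finset.sum_div]
    exact div_self hS.ne'
  have hcard : (({jstar}ᶜ : Finset (Fin N)).card : ℝ) = (N:ℝ) - 1 := by
    rw [Finset.card_compl, Finset.card_singleton, Fintype.card_fin]
    have : 1 ≤ N := by omega
    push_cast [Nat.cast_sub this]
    ring
  -- α jstar ≥ p
  have hsum_le : ∑ k, Real.exp (ℓ k) ≤ Real.exp (ℓ jstar) * D := by
    rw [Fintype.sum_eq_add_sum_compl jstar]
    have hb : ∀ j ∈ ({jstar}ᶜ : Finset (Fin N)),
        Real.exp (ℓ j) ≤ Real.exp (ℓ jstar) * Real.exp (-Δ) := by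
      intro j hj
      rw [← Real.exp_add]
      have hj' : j ≠ jstar := by simpa using hj
      exact Real.exp_le_exp.mpr (by linarith [hmargin j hj'])
    have := Finset.sum_le_card_nsmul _ _ _ hb
    rw [nsmul_eq_mul, hcard] at this
    rw [hDdef]
    nlinarith [Real.exp_pos (ℓ jstar)]
  have hαstar : p ≤ smax N ℓ jstar := by
    rw [hpdef, smax, div_le_div_iff₀ hD hS, one_mul]
    calc ∑ k, Real.exp (ℓ k) ≤ Real.exp (ℓ jstar) * D := hsum_le
      _ = Real.exp (ℓ jstar) * (1 + ((N:ℝ)-1) * Real.exp (-Δ)) := by rw [hDdef]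
  -- reference distribution
  set r : ℝ := (1 - p) / ((N:ℝ) - 1) with hrdef
  have hr0 : 0 < r := by rw [hrdef]; exact div_pos (by linarith) hN1pos
  have hrp : r ≤ p := by
    rw [hrdef, div_le_iff₀ hN1pos]
    nlinarith
  set q : Fin N → ℝ := fun j => if j = jstar then p else r with hqdef
  have hq_pos : ∀ j, 0 < q j := by
    intro j; rw [hqdef]; dsimp only; split <;> [exact hp0; exact hr0]
  have hq_eq : ∀ j ∈ ({jstar}ᶜ : Finset (Fin N)), q j = r := by
    intro j hj
    rw [hqdef]; dsimp only; rw [if_neg (by simpa using hj)]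
  clear_value p r q D
  have hq_sum : ∑ j, q j = 1 := by
    rw [Fintype.sum_eq_add_sum_compl jstar]
    have h1 : q jstar = p := by rw [hqdef]; simp
    have h2 : ∑ j ∈ ({jstar}ᶜ : Finset (Fin N)), q j
        = (({jstar}ᶜ : Finset (Fin N)).card : ℝ) * r := by
      rw [Finset.sum_congr rfl hq_eq, Finset.sum_const, nsmul_eq_mul]
    rw [h1, h2, hcard, hrdef]
    field_simp
    ring
  -- Gibbs inequality
  have gibbs : (-∑ j, smax N ℓ j * Real.log (smax N ℓ j)) ≤
      -∑ j, smax N ℓ j * Real.log (q j) := by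
    have key : ∀ j ∈ (Finset.univ : Finset (Fin N)),
        smax N ℓ j * Real.log (q j) - smax N ℓ j * Real.log (smax N ℓ j)
          ≤ q j - smax N ℓ j := by
      intro j _
      have h1 : Real.log (q j / smax N ℓ j) ≤ q j / smax N ℓ j - 1 :=
        Real.log_le_sub_one_of_pos (div_pos (hq_pos j) (hα_pos j))
      have h2 := mul_le_mul_of_nonneg_left h1 (hα_pos j).le
      rw [Real.log_div (hq_pos j).ne' (hα_pos j).ne'] at h2
      have h3 : smax N ℓ j * (q j / smax N ℓ j - 1) = q j - smax N ℓ j := by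
        field_simp [(hα_pos j).ne']
      linarith [h2, h3.le, h3.ge]
    have hsum := Finset.sum_le_sum key
    rw [Finset.sum_sub_distrib, Finset.sum_sub_distrib, hα_sum, hq_sum] at hsum
    linarith
  -- evaluate cross entropy
  have cross : -∑ j, smax N ℓ j * Real.log (q j)
      = -(smax N ℓ jstar * Real.log p) - (1 - smax N ℓ jstar) * Real.log r := by
    rw [Fintype.sum_eq_add_sum_compl jstar]
    have h1 : q jstar = p := by rw [hqdef]; simp
    have h2 : ∑ j ∈ ({jstar}ᶜ : Finset (Fin N)), smax N ℓ j * Real.log (q j)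
        = (∑ j ∈ ({jstar}ᶜ : Finset (Fin N)), smax N ℓ j) * Real.log r := by
      rw [Finset.sum_mul]
      exact Finset.sum_congr rfl (fun j hj => by rw [hq_eq j hj])
    have h3 : ∑ j ∈ ({jstar}ᶜ : Finset (Fin N)), smax N ℓ j = 1 - smax N ℓ jstar := by
      have := hα_sum
      rw [Fintype.sum_eq_add_sum_compl jstar] at this
      linarith
    rw [h1, h2, h3]
    ring
  -- monotone step
  have mono : -(smax N ℓ jstar * Real.log p) - (1 - smax N ℓ jstar) * Real.log r
      ≤ -(p * Real.log p) - (1 - p) * Real.log r := by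
    have hlog : Real.log r ≤ Real.log p := Real.log_le_log hr0 hrp
    nlinarith [mul_nonneg (sub_nonneg.mpr hαstar) (sub_nonneg.mpr hlog)]
  -- rewrite target
  have htarget : -p * Real.log p - (1 - p) * Real.log (1 - p)
        + (1 - p) * Real.log ((N:ℝ) - 1)
      = -(p * Real.log p) - (1 - p) * Real.log r := by
    rw [hrdef, Real.log_div (by linarith) (by linarith)]
    ring
  rw [htarget]
  calc (-∑ j, smax N ℓ j * Real.log (smax N ℓ j))
      ≤ -∑ j, smax N ℓ j * Real.log (q j) := gibbs
    _ = -(smax N ℓ jstar * Real.log p) - (1 - smax N ℓ jstar) * Real.log r := cross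
    _ ≤ -(p * Real.log p) - (1 - p) * Real.log r := mono
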